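/- The set H₂ = {x₀ + x₂e₂ : x₀ ≠ 0} is a normal subgroup of the group G of invertible elements of A. -/

import Mathlib

def Amul (x y : ℝ × ℝ × ℝ) : ℝ × ℝ × ℝ :=
  (x.1 * y.1 + x.2.1 * y.2.1,
   x.1 * y.2.1 + x.2.1 * y.1,
   x.1 * y.2.2 + x.2.1 * y.2.2 + x.2.2 * y.1 - x.2.2 * y.2.1)

def Aone : ℝ × ℝ × ℝ := (1, 0, 0)

def Ginv : Set (ℝ × ℝ × ℝ) :=
  {x | ∃ y : ℝ × ℝ × ℝ, Amul x y = Aone ∧ Amul y x = Aone}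

/-- `H₂ = {x₀ + x₂e₂ : x₀ ≠ 0}`. -/
def H₂ : Set (ℝ × ℝ × ℝ) := {x | x.2.1 = 0 ∧ x.1 ≠ 0}

/-- `H₂` is a normal subgroup of the group `G` of invertible elements of `A`. -/
theorem stmt_7 :
    H₂ ⊆ Ginv ∧
    Aone ∈ H₂ ∧
    (∀ x ∈ H₂, ∀ y ∈ H₂, Amul x y ∈ H₂) ∧
    (∀ x ∈ H₂, ∀ y : ℝ × ℝ × ℝ, Amul x y = Aone ∧ Amul y x = Aone → y ∈ H₂) ∧
    (∀ g ∈ Ginv, ∀ g' : ℝ × ℝ × ℝ, Amul g g' = Aone ∧ Amul g' g = Aone →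
      ∀ h ∈ H₂, Amul (Amul g h) g' ∈ H₂) := by
  refine ⟨?_, ?_, ?_, ?_, ?_⟩
  · rintro ⟨a, b, c⟩ ⟨hb, ha⟩
    obtain rfl : b = 0 := hb
    simp only at ha
    refine ⟨(a⁻¹, 0, -c / a ^ 2), ?_, ?_⟩ <;>
      · simp only [Amul, Aone, Prod.mk.injEq]
        refine ⟨by field_simp; norm_num, by ring, by field_simp; ring⟩
  · exact ⟨rfl, one_ne_zero⟩
  · rintro ⟨a, b, c⟩ ⟨hb, ha⟩ ⟨a', b', c'⟩ ⟨hb', ha'⟩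
    simp only at hb ha hb' ha'
    subst hb; subst hb'
    exact ⟨by simp [Amul], by simp [Amul]; exact ⟨ha, ha'⟩⟩
  · rintro ⟨a, b, c⟩ ⟨hb, ha⟩ ⟨p, q, r⟩ ⟨h1, h2⟩
    obtain rfl : b = 0 := hb
    simp only at ha
    simp only [Amul, Aone, Prod.mk.injEq] at h1
    obtain ⟨e1, e2, -⟩ := h1
    refine ⟨?_, ?_⟩
    · have h0 : a * q = 0 := by linear_combination e2
      rcases mul_eq_zero.mp h0 with h | h
      · exact absurd h ha
      · exact h
    · intro hp
      have h1' : a * p = 1 := by linear_combination e1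
      rw [show (p, q, r).1 = p from rfl] at hp
      rw [hp, mul_zero] at h1'
      exact zero_ne_one h1'
  · rintro ⟨g0, g1, g2⟩ ⟨y, hy⟩ ⟨p, q, r⟩ ⟨h1, h2⟩ ⟨a, b, c⟩ ⟨hb, ha⟩
    obtain rfl : b = 0 := hb
    simp only [Amul, Aone, Prod.mk.injEq] at h1 h2
    obtain ⟨e1, e2, -⟩ := h1
    constructor
    · show (g0 * a + g1 * 0) * q + (g0 * 0 + g1 * a) * p = 0
      linear_combination a * e2
    · show (g0 * a + g1 * 0) * p + (g0 * 0 + g1 * a) * q ≠ 0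
      have : (g0 * a + g1 * 0) * p + (g0 * 0 + g1 * a) * q = a := by linear_combination a * e1
      rw [this]; exact ha
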